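/- Let κ be a regular uncountable cardinal and let X be the set {(α, n) : α < κ, n ∈ ℤ} ∪ {(κ, 0)} ⊆ (κ+1) × ℤ, ordered lexicographically and given the order topology of this linear order. Then X is a κ-compact linearly ordered topological space and Nt(X) = κ; that is, X has a κ^op-like base but no λ^op-like base for any infinite cardinal λ < κ. In particular, for κ = ω₁ this X is a Lindelöf, nonseparable linearly ordered topological space with Noetherian type ω₁. -/

import Mathlib

open Cardinal Set TopologicalSpace

universe u

/-- A family `B` of subsets of a space is `κ`-op-like if every member of `B`
has fewer than `κ`-many supersets in `B`. -/
def OpLike {X : Type u} (κ : Cardinal.{u}) (B : Set (Set X)) : Prop :=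
  ∀ U ∈ B, #{V ∈ B | U ⊆ V} < κ

/-- The Noetherian type of a space: the least infinite `κ` such that the space
has a `κ`-op-like base. -/
noncomputable def NoetherianType (X : Type u) [TopologicalSpace X] : Cardinal.{u} :=
  sInf {κ : Cardinal.{u} | ℵ₀ ≤ κ ∧ ∃ B : Set (Set X), IsTopologicalBasis B ∧ OpLike κ B}

/-- The weight of a space: the least infinite `κ` such that the space has
a base of cardinality at most `κ`. -/
noncomputable def Weight (X : Type u) [TopologicalSpace X] : Cardinal.{u} :=
  sInf {κ : Cardinal.{u} | ℵ₀ ≤ κ ∧ ∃ B : Set (Set X), IsTopologicalBasis B ∧ #B ≤ κ}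

/-- A π-base: a family of nonempty open sets such that every nonempty open set
contains a member of the family. -/
def IsPiBase {X : Type u} [TopologicalSpace X] (B : Set (Set X)) : Prop :=
  (∀ U ∈ B, IsOpen U ∧ U.Nonempty) ∧
    ∀ U : Set X, IsOpen U → U.Nonempty → ∃ V ∈ B, V ⊆ U

/-- The π-weight of a space: the least infinite `κ` such that the space has
a π-base of cardinality at most `κ`. -/
noncomputable def PiWeight (X : Type u) [TopologicalSpace X] : Cardinal.{u} :=
  sInf {κ : Cardinal.{u} | ℵ₀ ≤ κ ∧ ∃ B : Set (Set X), IsPiBase B ∧ #B ≤ κ}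

/-- The density of a space: the least infinite `κ` such that the space has
a dense subset of cardinality at most `κ`. -/
noncomputable def Density (X : Type u) [TopologicalSpace X] : Cardinal.{u} :=
  sInf {κ : Cardinal.{u} | ℵ₀ ≤ κ ∧ ∃ D : Set X, Dense D ∧ #D ≤ κ}

/-- A GO-space: a linearly ordered set whose topology is induced by an order
embedding into some linearly ordered topological space (a linear order with
its order topology). -/
def IsGOSpace (X : Type u) [LinearOrder X] [tX : TopologicalSpace X] : Prop :=
  ∃ (Y : Type u) (lo : LinearOrder Y) (e : X → Y),
    @StrictMono X Y _ lo.toPartialOrder.toPreorder e ∧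
    tX = TopologicalSpace.induced e (@Preorder.topology Y lo.toPartialOrder.toPreorder)

/-- A space is `μ`-compact if every open cover has a subcover of cardinality
less than `μ`. -/
def MuCompact (μ : Cardinal.{u}) (X : Type u) [TopologicalSpace X] : Prop :=
  ∀ 𝒰 : Set (Set X), (∀ U ∈ 𝒰, IsOpen U) → ⋃₀ 𝒰 = Set.univ →
    ∃ 𝒱 ⊆ 𝒰, #𝒱 < μ ∧ ⋃₀ 𝒱 = Set.univ

/-- A cardinal is weakly inaccessible if it is uncountable, regular, and
a limit cardinal. -/
def IsWeaklyInaccessible (κ : Cardinal.{u}) : Prop :=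
  ℵ₀ < κ ∧ κ.IsRegular ∧ ∀ μ < κ, Order.succ μ < κ

/-- The space `(κ × ℤ) ∪ {(κ, 0)} ⊆ (κ+1) × ℤ`, ordered lexicographically:
points of `(κ+1) ×ₗ ℤ` whose first coordinate is not the top point `κ`, or
whose second coordinate is `0`. -/
def KappaSpace (κ : Cardinal.{u}) : Type u :=
  {p : (Order.succ κ.ord).ToType ×ₗ ℤ // ¬ IsMax (ofLex p).1 ∨ (ofLex p).2 = 0}

noncomputable instance (κ : Cardinal.{u}) : LinearOrder (KappaSpace κ) := by
  unfold KappaSpace; infer_instance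

/-- `KappaSpace κ` carries the order topology of its lexicographic order, so
it is a linearly ordered topological space. -/
noncomputable instance (κ : Cardinal.{u}) : TopologicalSpace (KappaSpace κ) :=
  Preorder.topology (KappaSpace κ)

instance (κ : Cardinal.{u}) : OrderTopology (KappaSpace κ) := ⟨rfl⟩

namespace KSAux

variable (κ : Cardinal.{u})

abbrev KT := (Order.succ κ.ord).ToType

noncomputable def ksEnum : Set.Iio (Order.succ κ.ord) ≃o KT κ := Ordinal.ToType.mk

noncomputable def ksTopT : KT κ := ksEnum κ ⟨κ.ord, Set.mem_Iio.mpr (Order.lt_succ _)⟩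

variable {κ}

lemma le_ksTopT (a : KT κ) : a ≤ ksTopT κ := by
  have h : (ksEnum κ).symm a ≤ ⟨κ.ord, Set.mem_Iio.mpr (Order.lt_succ _)⟩ := by
    exact Subtype.coe_le_coe.mp (Order.le_of_lt_succ ((ksEnum κ).symm a).2)
  have := (ksEnum κ).le_iff_le.mpr h
  simpa [ksTopT] using this

lemma isMax_iff {a : KT κ} : IsMax a ↔ a = ksTopT κ := by
  constructor
  · intro h; exact le_antisymm (le_ksTopT a) (h (le_ksTopT a))
  · rintro rfl b _; exact le_ksTopT b

noncomputable def ksTop (κ : Cardinal.{u}) : KappaSpace κ := ⟨toLex (ksTopT κ, 0), Or.inr rfl⟩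

lemma ks_lt_iff {x y : KappaSpace κ} : x < y ↔ (ofLex x.val).1 < (ofLex y.val).1 ∨
    ((ofLex x.val).1 = (ofLex y.val).1 ∧ (ofLex x.val).2 < (ofLex y.val).2) :=
  Prod.Lex.lt_iff

lemma ks_le_iff {x y : KappaSpace κ} : x ≤ y ↔ (ofLex x.val).1 < (ofLex y.val).1 ∨
    ((ofLex x.val).1 = (ofLex y.val).1 ∧ (ofLex x.val).2 ≤ (ofLex y.val).2) :=
  Prod.Lex.le_iff

lemma ks_ext {x y : KappaSpace κ} (h1 : (ofLex x.val).1 = (ofLex y.val).1)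
    (h2 : (ofLex x.val).2 = (ofLex y.val).2) : x = y := by
  apply Subtype.ext
  have : ofLex x.val = ofLex y.val := Prod.ext h1 h2
  exact ofLex.injective this

lemma le_ksTop (x : KappaSpace κ) : x ≤ ksTop κ := by
  rcases lt_or_eq_of_le (le_ksTopT (ofLex x.val).1) with h | h
  · exact ks_le_iff.mpr (Or.inl h)
  · have hmax : IsMax (ofLex x.val).1 := isMax_iff.mpr h
    have h2 : (ofLex x.val).2 = 0 := x.2.resolve_left (not_not_intro hmax)
    exact le_of_eq (ks_ext (by simpa [ksTop] using h) (by simpa [ksTop] using h2))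

lemma first_ne_top_of_ne {x : KappaSpace κ} (h : x ≠ ksTop κ) :
    (ofLex x.val).1 ≠ ksTopT κ := by
  intro hc
  rcases x.2 with hm | h2
  · exact hm (isMax_iff.mpr hc)
  · exact h (ks_ext (by simpa [ksTop] using hc) (by simpa [ksTop] using h2))

lemma lt_ksTop_of_ne {x : KappaSpace κ} (h : x ≠ ksTop κ) : x < ksTop κ :=
  lt_of_le_of_ne (le_ksTop x) h


/-- neighbor point with integer coordinate shifted by `k`. -/
noncomputable def shift (x : KappaSpace κ) (h : x ≠ ksTop κ) (k : ℤ) : KappaSpace κ :=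
  ⟨toLex ((ofLex x.val).1, (ofLex x.val).2 + k),
    Or.inl (fun hm => first_ne_top_of_ne h (isMax_iff.mp hm))⟩

lemma isOpen_singleton {x : KappaSpace κ} (h : x ≠ ksTop κ) : IsOpen ({x} : Set (KappaSpace κ)) := by
  have key : ({x} : Set (KappaSpace κ)) = Ioo (shift x h (-1)) (shift x h 1) := by
    ext z
    simp only [mem_singleton_iff, mem_Ioo]
    constructor
    · rintro rfl
      constructor
      · exact ks_lt_iff.mpr (Or.inr ⟨rfl, by simp [shift]⟩)
      · exact ks_lt_iff.mpr (Or.inr ⟨rfl, by simp [shift]⟩)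
    · rintro ⟨h1, h2⟩
      rcases ks_lt_iff.mp h1 with hl | ⟨he, hn⟩
      · rcases ks_lt_iff.mp h2 with hl2 | ⟨he2, hn2⟩
        · exact absurd (hl.trans hl2) (by simp [shift])
        · exact absurd (he2 ▸ hl) (by simp [shift])
      · rcases ks_lt_iff.mp h2 with hl2 | ⟨he2, hn2⟩
        · exact absurd (he ▸ hl2) (by simp [shift])
        · refine (ks_ext ?_ ?_).symm
          · simp only [shift, ofLex_toLex] at he; exact he
          · simp only [shift, ofLex_toLex] at hn hn2
            omega
  rw [key]; exact isOpen_Ioo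

lemma first_ord_lt {x : KappaSpace κ} (h : x ≠ ksTop κ) :
    (((ksEnum κ).symm (ofLex x.val).1) : Ordinal.{u}) < κ.ord := by
  rcases (Order.le_of_lt_succ (Set.mem_Iio.mp ((ksEnum κ).symm (ofLex x.val).1).2)).lt_or_eq
    with h' | h'
  · exact h'
  · exfalso
    apply first_ne_top_of_ne h
    have he : (ksEnum κ).symm (ofLex x.val).1 = ⟨κ.ord, Set.mem_Iio.mpr (Order.lt_succ _)⟩ :=
      Subtype.ext h'
    have := congrArg (ksEnum κ) he
    simpa [ksTopT] using this

/-- Cardinality of initial segments below a non-top point is `< κ`. -/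
lemma mk_Iic_lt (hreg : κ.IsRegular) (hunc : ℵ₀ < κ) {y : KappaSpace κ} (h : y ≠ ksTop κ) :
    #(Iic y) < κ := by
  set a := (ofLex y.val).1 with ha
  set β : Ordinal.{u} := ((ksEnum κ).symm a).1 with hβ
  have hβlt : β < κ.ord := first_ord_lt h
  have hord : Order.IsSuccLimit κ.ord := Cardinal.isSuccLimit_ord hreg.aleph0_le
  have hβ1 : β + 1 < κ.ord := hord.succ_lt hβlt
  -- injection from Iic y into (β+1).ToType × ℤ
  have hinj : ∃ f : (Iic y) → ((β+1).ToType × ℤ), Function.Injective f := by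
    refine ⟨fun z => (Ordinal.ToType.mk (o := β+1)
      ⟨((ksEnum κ).symm (ofLex z.1.val).1).1, ?_⟩, (ofLex z.1.val).2), ?_⟩
    · have hz : z.1 ≤ y := z.2
      have : (ofLex z.1.val).1 ≤ a := by
        rcases ks_le_iff.mp hz with h' | ⟨h', _⟩
        · exact le_of_lt h'
        · exact le_of_eq h'
      have : (ksEnum κ).symm (ofLex z.1.val).1 ≤ (ksEnum κ).symm a :=
        (ksEnum κ).symm.le_iff_le.mpr this
      have hc : ((ksEnum κ).symm (ofLex z.1.val).1).1 ≤ β := Subtype.coe_le_coe.mpr this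
      refine Set.mem_Iio.mpr ?_
      rw [Ordinal.add_one_eq_succ]
      exact Order.lt_succ_iff.mpr hc
    · intro z w hzw
      have h1 := congrArg Prod.fst hzw
      have h2 := congrArg Prod.snd hzw
      simp only at h1 h2
      have h1' : ((ksEnum κ).symm (ofLex z.1.val).1).1 = ((ksEnum κ).symm (ofLex w.1.val).1).1 :=
        Subtype.mk_eq_mk.mp ((Ordinal.ToType.mk (o := β+1)).injective h1)
      have : (ofLex z.1.val).1 = (ofLex w.1.val).1 :=
        (ksEnum κ).symm.injective (Subtype.ext h1')
      exact Subtype.ext (ks_ext this h2)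
  obtain ⟨f, hf⟩ := hinj
  calc #(Iic y) ≤ #((β+1).ToType × ℤ) := Cardinal.mk_le_of_injective hf
    _ = (β+1).card * ℵ₀ := by simp [Cardinal.mk_toType, Cardinal.mk_int]
    _ < κ := Cardinal.mul_lt_of_lt hreg.aleph0_le (Cardinal.lt_ord.mp hβ1) hunc



/-- Any small set of points is strictly bounded by some non-top point. -/
lemma exists_bound (hreg : κ.IsRegular) (S : Set (KappaSpace κ)) (hS : #S < κ) :
    ∃ y : KappaSpace κ, y ≠ ksTop κ ∧ ∀ s ∈ S, s ≠ ksTop κ → s < y := by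
  have hord : Order.IsSuccLimit κ.ord := Cardinal.isSuccLimit_ord hreg.aleph0_le
  classical
  set f : S → Ordinal.{u} := fun s =>
    if h : s.1 = ksTop κ then 0 else (((ksEnum κ).symm (ofLex s.1.val).1) : Ordinal.{u}) + 1
    with hf
  have hflt : ∀ s, f s < κ.ord := by
    intro s
    by_cases h : s.1 = ksTop κ
    · simp [hf, h, hord.pos]
    · simp only [hf, h, dif_neg, not_false_iff]
      exact hord.succ_lt (first_ord_lt h)
  have hcof : #S < κ.ord.cof := by rwa [hreg.cof_eq]
  have ho : (⨆ s, f s) < κ.ord := Ordinal.iSup_lt_ord hcof hflt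
  set o := ⨆ s, f s with hodef
  refine ⟨⟨toLex (ksEnum κ ⟨o, Set.mem_Iio.mpr (ho.trans (Order.lt_succ _))⟩, 0), Or.inr rfl⟩,
    ?_, ?_⟩
  · intro hc
    have h1 := congrArg (fun z : KappaSpace κ => (ofLex z.val).1) hc
    simp only [ksTop, ofLex_toLex] at h1
    have := (ksEnum κ).injective h1
    have : o = κ.ord := Subtype.mk_eq_mk.mp this
    exact absurd (this ▸ ho) (lt_irrefl _)
  · intro s hs hsne
    apply ks_lt_iff.mpr
    left
    simp only [ofLex_toLex]
    have h1 : f ⟨s, hs⟩ ≤ o := Ordinal.le_iSup f ⟨s, hs⟩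
    have h2 : (((ksEnum κ).symm (ofLex s.val).1) : Ordinal.{u}) < o := by
      have he : f ⟨s, hs⟩ = (((ksEnum κ).symm (ofLex s.val).1) : Ordinal.{u}) + 1 := by
        simp [hf, hsne]
      refine lt_of_lt_of_le ?_ (he ▸ h1)
      rw [Ordinal.add_one_eq_succ]
      exact Order.lt_succ _
    have h3 : (ksEnum κ).symm (ofLex s.val).1 <
        ⟨o, Set.mem_Iio.mpr (ho.trans (Order.lt_succ _))⟩ := Subtype.mk_lt_mk.mpr h2
    rw [show (ofLex s.val).1 = ksEnum κ ((ksEnum κ).symm (ofLex s.val).1) from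
      ((ksEnum κ).apply_symm_apply _).symm]
    exact (ksEnum κ).lt_iff_lt.mpr h3



lemma exists_ne_top (hreg : κ.IsRegular) : ∃ x : KappaSpace κ, x ≠ ksTop κ := by
  obtain ⟨y, hy, -⟩ := exists_bound hreg ∅ (by simp [hreg.aleph0_le.trans_lt'
    (by simpa using Cardinal.aleph0_pos)])
  exact ⟨y, hy⟩

lemma Ioi_eq_Ioc {l : KappaSpace κ} : Ioi l = Ioc l (ksTop κ) := by
  ext z; simp only [mem_Ioi, mem_Ioc]
  exact ⟨fun h => ⟨h, le_ksTop z⟩, fun h => h.1⟩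

/-- The κ-op-like base. -/
def ksBase (κ : Cardinal.{u}) : Set (Set (KappaSpace κ)) :=
  {s | ∃ x : KappaSpace κ, x ≠ ksTop κ ∧ s = {x}} ∪
    {s | ∃ y : KappaSpace κ, y ≠ ksTop κ ∧ s = Ioi y}

lemma isBasis_ksBase (hreg : κ.IsRegular) : IsTopologicalBasis (ksBase κ) := by
  apply isTopologicalBasis_of_isOpen_of_nhds
  · rintro u (⟨x, hx, rfl⟩ | ⟨y, hy, rfl⟩)
    · exact isOpen_singleton hx
    · exact isOpen_Ioi
  · intro a u ha hu
    by_cases hat : a = ksTop κ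
    · subst hat
      obtain ⟨x0, hx0⟩ := exists_ne_top hreg
      obtain ⟨l, hl, hsub⟩ := exists_Ioc_subset_of_mem_nhds (hu.mem_nhds ha)
        ⟨x0, lt_ksTop_of_ne hx0⟩
      refine ⟨Ioi l, Or.inr ⟨l, ne_of_lt hl, rfl⟩, hl, ?_⟩
      rw [Ioi_eq_Ioc]; exact hsub
    · exact ⟨{a}, Or.inl ⟨a, hat, rfl⟩, rfl, singleton_subset_iff.mpr ha⟩

lemma Ioi_inj {y y' : KappaSpace κ} (h : Ioi y = Ioi y') : y = y' := by
  by_contra hne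
  rcases lt_or_gt_of_ne hne with hlt | hlt
  · exact absurd (h ▸ mem_Ioi.mpr hlt) (by simp)
  · exact absurd (h.symm ▸ mem_Ioi.mpr hlt) (by simp)

lemma opLike_ksBase (hreg : κ.IsRegular) (hunc : ℵ₀ < κ) : OpLike κ (ksBase κ) := by
  rintro U (⟨x, hx, rfl⟩ | ⟨y, hy, rfl⟩)
  · -- supersets of {x}
    have hsub : {V ∈ ksBase κ | {x} ⊆ V} ⊆ insert {x} ((fun y => Ioi y) '' (Iio x)) := by
      rintro V ⟨(⟨x', hx', rfl⟩ | ⟨y', hy', rfl⟩), hV⟩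
      · have : x = x' := by simpa using hV
        subst this; exact mem_insert _ _
      · exact mem_insert_of_mem _ ⟨y', by simpa using hV, rfl⟩
    calc #{V ∈ ksBase κ | {x} ⊆ V} ≤ #(↥(insert ({x} : Set (KappaSpace κ))
          ((fun y => Ioi y) '' (Iio x)))) := Cardinal.mk_le_mk_of_subset hsub
      _ ≤ #((fun y : KappaSpace κ => Ioi y) '' (Iio x)) + 1 := Cardinal.mk_insert_le
      _ ≤ #(Iio x) + 1 := by gcongr; exact Cardinal.mk_image_le
      _ ≤ #(Iic x) + 1 := by gcongr; exact Cardinal.mk_le_mk_of_subset Iio_subset_Iic_self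
      _ < κ := Cardinal.add_lt_of_lt hreg.aleph0_le (mk_Iic_lt hreg hunc hx)
          (lt_of_lt_of_le Cardinal.one_lt_aleph0 hreg.aleph0_le)
  · -- supersets of Ioi y
    have hsub : {V ∈ ksBase κ | Ioi y ⊆ V} ⊆ (fun y' => Ioi y') '' (Iic y) := by
      rintro V ⟨(⟨x', hx', rfl⟩ | ⟨y', hy', rfl⟩), hV⟩
      · exfalso
        have h1 : ksTop κ ∈ Ioi y := mem_Ioi.mpr (lt_ksTop_of_ne hy)
        have h2 : ksTop κ = x' := by simpa using hV h1
        exact hx' h2.symm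
      · refine ⟨y', ?_, rfl⟩
        by_contra hc
        have : y < y' := not_le.mp (by simpa using hc)
        exact absurd (hV (mem_Ioi.mpr this)) (by simp)
    calc #{V ∈ ksBase κ | Ioi y ⊆ V} ≤ #((fun y' : KappaSpace κ => Ioi y') '' (Iic y)) :=
        Cardinal.mk_le_mk_of_subset hsub
      _ ≤ #(Iic y) := Cardinal.mk_image_le
      _ < κ := mk_Iic_lt hreg hunc hy



lemma singleton_mem_basis {B : Set (Set (KappaSpace κ))} (hB : IsTopologicalBasis B)
    {x : KappaSpace κ} (h : x ≠ ksTop κ) : {x} ∈ B := by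
  obtain ⟨V, hVB, hxV, hVsub⟩ := hB.exists_subset_of_mem_open (mem_singleton x)
    (isOpen_singleton h)
  have : V = {x} := subset_antisymm hVsub (singleton_subset_iff.mpr hxV)
  rwa [this] at hVB

lemma muCompact (hreg : κ.IsRegular) (hunc : ℵ₀ < κ) : MuCompact κ (KappaSpace κ) := by
  intro 𝒰 hopen hcov
  have htop : ksTop κ ∈ ⋃₀ 𝒰 := hcov ▸ mem_univ _
  obtain ⟨U0, hU0, htop0⟩ := htop
  obtain ⟨x0, hx0⟩ := exists_ne_top hreg
  obtain ⟨l, hl, hsub⟩ := exists_Ioc_subset_of_mem_nhds ((hopen U0 hU0).mem_nhds htop0)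
    ⟨x0, lt_ksTop_of_ne hx0⟩
  have hz : ∀ z : (Iic l : Set (KappaSpace κ)), ∃ U ∈ 𝒰, z.1 ∈ U := by
    intro z
    have : z.1 ∈ ⋃₀ 𝒰 := hcov ▸ mem_univ _
    exact this
  choose F hF1 hF2 using hz
  refine ⟨insert U0 (range F), ?_, ?_, ?_⟩
  · rintro V (rfl | ⟨z, rfl⟩)
    · exact hU0
    · exact hF1 z
  · calc #(↥(insert U0 (range F))) ≤ #(range F) + 1 := Cardinal.mk_insert_le
      _ ≤ #(Iic l) + 1 := by gcongr; exact Cardinal.mk_range_le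
      _ < κ := Cardinal.add_lt_of_lt hreg.aleph0_le (mk_Iic_lt hreg hunc (ne_of_lt hl))
          (lt_of_lt_of_le Cardinal.one_lt_aleph0 hreg.aleph0_le)
  · rw [eq_univ_iff_forall]
    intro z
    by_cases hzl : z ≤ l
    · exact ⟨F ⟨z, hzl⟩, mem_insert_of_mem _ (mem_range_self _), hF2 ⟨z, hzl⟩⟩
    · exact ⟨U0, mem_insert _ _, hsub ⟨not_le.mp hzl, le_ksTop z⟩⟩

lemma no_small_opLike (hreg : κ.IsRegular) {lam : Cardinal.{u}}
    (hlam : lam < κ) {B : Set (Set (KappaSpace κ))}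
    (hB : IsTopologicalBasis B) (hop : OpLike lam B) : False := by
  classical
  obtain ⟨x0, hx0⟩ := exists_ne_top hreg
  set N := {V ∈ B | ksTop κ ∈ V} with hNdef
  have hN : ∀ V : ↥N, ∃ l, l ≠ ksTop κ ∧ Ioi l ⊆ V.1 := by
    intro V
    obtain ⟨l, hl, hsub⟩ := exists_Ioc_subset_of_mem_nhds
      ((hB.isOpen V.2.1).mem_nhds V.2.2) ⟨x0, lt_ksTop_of_ne hx0⟩
    exact ⟨l, ne_of_lt hl, by rw [Ioi_eq_Ioc]; exact hsub⟩
  choose L hL1 hL2 using hN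
  have hNbig : κ ≤ #N := by
    by_contra hlt
    push_neg at hlt
    obtain ⟨y, hy, hbd⟩ := exists_bound hreg (range L)
      (lt_of_le_of_lt Cardinal.mk_range_le hlt)
    obtain ⟨V, hVB, hVtop, hVsub⟩ := hB.exists_subset_of_mem_open
      (mem_Ioi.mpr (lt_ksTop_of_ne hy)) isOpen_Ioi
    have hVN : V ∈ N := ⟨hVB, hVtop⟩
    have hyV : y ∈ V := hL2 ⟨V, hVN⟩
      (mem_Ioi.mpr (hbd (L ⟨V, hVN⟩) (mem_range_self _) (hL1 _)))
    exact absurd (hVsub hyV) (by simp)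
  obtain ⟨S', hS'⟩ := Cardinal.le_mk_iff_exists_set.mp (le_of_lt (lt_of_lt_of_le hlam hNbig))
  have hcard : #(L '' S') < κ := lt_of_le_of_lt (Cardinal.mk_image_le) (hS' ▸ hlam)
  obtain ⟨y, hy, hbd⟩ := exists_bound hreg (L '' S') hcard
  have hyV : ∀ V : ↥N, V ∈ S' → y ∈ (V : Set (KappaSpace κ)) := by
    intro V hV
    exact hL2 V (mem_Ioi.mpr (hbd (L V) (mem_image_of_mem _ hV) (hL1 _)))
  have hyB : ({y} : Set (KappaSpace κ)) ∈ B := singleton_mem_basis hB hy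
  have hble := hop {y} hyB
  have hinj : lam ≤ #{V ∈ B | ({y} : Set (KappaSpace κ)) ⊆ V} := by
    rw [← hS']
    refine Cardinal.mk_le_of_injective (f := fun V : ↥S' =>
      (⟨V.1.1, V.1.2.1, singleton_subset_iff.mpr (hyV V.1 V.2)⟩ :
        ↥{V ∈ B | ({y} : Set (KappaSpace κ)) ⊆ V})) ?_
    intro a b hab
    simp only [Subtype.mk_eq_mk] at hab
    exact Subtype.ext (Subtype.ext hab)
  exact absurd hble (not_lt.mpr hinj)



lemma dense_card (hreg : κ.IsRegular) {D : Set (KappaSpace κ)} (hD : Dense D) :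
    κ ≤ #D := by
  have key : ∀ t : κ.ord.ToType, ∃ d : ↥D,
      d.1 = ⟨toLex (ksEnum κ ⟨((Ordinal.ToType.mk (o := κ.ord)).symm t).1,
        Set.mem_Iio.mpr ((Set.mem_Iio.mp ((Ordinal.ToType.mk (o := κ.ord)).symm t).2).trans
          (Order.lt_succ _))⟩, 0), Or.inr rfl⟩ := by
    intro t
    set x : KappaSpace κ := ⟨toLex (ksEnum κ ⟨((Ordinal.ToType.mk (o := κ.ord)).symm t).1,
      Set.mem_Iio.mpr ((Set.mem_Iio.mp ((Ordinal.ToType.mk (o := κ.ord)).symm t).2).trans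
        (Order.lt_succ _))⟩, 0), Or.inr rfl⟩ with hx
    have hne : x ≠ ksTop κ := by
      intro hc
      have h1 := congrArg (fun z : KappaSpace κ => (ofLex z.val).1) hc
      simp only [hx, ksTop, ofLex_toLex] at h1
      have := Subtype.mk_eq_mk.mp ((ksEnum κ).injective h1)
      exact absurd this (ne_of_lt (Set.mem_Iio.mp ((Ordinal.ToType.mk (o := κ.ord)).symm t).2))
    obtain ⟨d, hdD, hdx⟩ := hD.exists_mem_open (isOpen_singleton hne) ⟨x, rfl⟩
    exact ⟨⟨d, hdD⟩, hdx⟩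
  choose f hf using key
  have hinj : Function.Injective f := by
    intro t t' htt
    have := (hf t).symm.trans (htt ▸ hf t')
    have h1 := congrArg (fun z : KappaSpace κ => (ofLex z.val).1) this
    simp only [ofLex_toLex] at h1
    have h2 := Subtype.mk_eq_mk.mp ((ksEnum κ).injective h1)
    exact (Ordinal.ToType.mk (o := κ.ord)).symm.injective (Subtype.ext h2)
  calc κ = κ.ord.card := (Cardinal.card_ord κ).symm
    _ = #(κ.ord.ToType) := (Cardinal.mk_toType κ.ord).symm
    _ ≤ #D := Cardinal.mk_le_of_injective hinj

lemma lindelof (hκ : κ = Cardinal.aleph 1) : LindelofSpace (KappaSpace κ) := by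
  have hreg : κ.IsRegular := hκ ▸ Cardinal.isRegular_aleph_one
  have hunc : ℵ₀ < κ := hκ ▸ Cardinal.aleph0_lt_aleph_one
  constructor
  apply isLindelof_of_countable_subcover
  intro ι U hUo hsU
  obtain ⟨𝒱, h𝒱sub, h𝒱card, h𝒱cov⟩ := muCompact hreg hunc (range U)
    (by rintro V ⟨i, rfl⟩; exact hUo i)
    (by rw [sUnion_range]; exact eq_univ_of_univ_subset hsU)
  have h𝒱count : 𝒱.Countable := by
    rw [Cardinal.countable_iff_lt_aleph_one]
    exact hκ ▸ h𝒱card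
  have hchoice : ∀ V : ↥𝒱, ∃ i : ι, U i = V.1 := fun V => h𝒱sub V.2
  choose c hc using hchoice
  haveI := h𝒱count.to_subtype
  refine ⟨range c, countable_range c, ?_⟩
  intro x _
  have : x ∈ ⋃₀ 𝒱 := h𝒱cov ▸ mem_univ x
  obtain ⟨V, hV, hxV⟩ := this
  exact mem_biUnion (mem_range_self (⟨V, hV⟩ : ↥𝒱)) (by rw [hc ⟨V, hV⟩]; exact hxV)

lemma not_separable (hκ : κ = Cardinal.aleph 1) :
    ¬ TopologicalSpace.SeparableSpace (KappaSpace κ) := by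
  have hreg : κ.IsRegular := hκ ▸ Cardinal.isRegular_aleph_one
  rintro ⟨D, hDc, hDd⟩
  have h1 : κ ≤ #D := dense_card hreg hDd
  have h2 : #D < Cardinal.aleph 1 := (Cardinal.countable_iff_lt_aleph_one D).mp hDc
  exact absurd (hκ ▸ h1) (not_le.mpr h2)

end KSAux

/-- For a regular uncountable cardinal `κ`, the lexicographic space
`(κ × ℤ) ∪ {(κ, 0)}` is a `κ`-compact linearly ordered topological space with
Noetherian type `κ`: it has a `κ`-op-like base but no `λ`-op-like base for any
infinite `λ < κ`.  In particular, for `κ = ω₁` it is a Lindelöf, nonseparable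
linearly ordered topological space with Noetherian type `ω₁`. -/
theorem statement15 (κ : Cardinal.{u}) (hreg : κ.IsRegular) (hunc : ℵ₀ < κ) :
    MuCompact κ (KappaSpace κ) ∧
    NoetherianType (KappaSpace κ) = κ ∧
    (∃ B : Set (Set (KappaSpace κ)), IsTopologicalBasis B ∧ OpLike κ B) ∧
    (∀ lam : Cardinal.{u}, ℵ₀ ≤ lam → lam < κ →
      ¬ ∃ B : Set (Set (KappaSpace κ)), IsTopologicalBasis B ∧ OpLike lam B) ∧
    (κ = Cardinal.aleph 1 →
      LindelofSpace (KappaSpace κ) ∧ ¬ TopologicalSpace.SeparableSpace (KappaSpace κ)) := by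
  have hbase : ∃ B : Set (Set (KappaSpace κ)), IsTopologicalBasis B ∧ OpLike κ B :=
    ⟨KSAux.ksBase κ, KSAux.isBasis_ksBase hreg, KSAux.opLike_ksBase hreg hunc⟩
  refine ⟨KSAux.muCompact hreg hunc, ?_, hbase, ?_,
    fun hκ => ⟨KSAux.lindelof hκ, KSAux.not_separable hκ⟩⟩
  · apply le_antisymm
    · exact csInf_le' ⟨hreg.aleph0_le, hbase⟩
    · refine le_csInf ⟨κ, hreg.aleph0_le, hbase⟩ ?_
      rintro μ ⟨hμ0, B, hB, hop⟩
      by_contra hc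
      exact KSAux.no_small_opLike hreg (not_le.mp hc) hB hop
  · rintro lam _ hlt ⟨B, hB, hop⟩
    exact KSAux.no_small_opLike hreg hlt hB hop
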